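/- The dual graph of a 1-thin simple polyomino is a tree: if P is an edge-connected finite set of unit cells in ℤ² containing no 2×2 block of cells and having no holes, then the grid graph on the cells of P (with edges between edge-adjacent cells) is acyclic and connected. -/

import Mathlib

/-- The infinite grid graph on `ℤ²`. -/
def gridGraph : SimpleGraph (ℤ × ℤ) where
  Adj a b := |a.1 - b.1| + |a.2 - b.2| = 1
  symm := by
    constructor
    intro a b h
    rw [abs_sub_comm b.1 a.1, abs_sub_comm b.2 a.2]
    exact h
  loopless := by constructor; intro a; simp

namespace ThinPolyAux

open SimpleGraph

open Classical in
noncomputable def ind (p : Prop) : ZMod 2 := if p then 1 else 0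

lemma ind_of {p : Prop} (h : p) : ind p = 1 := by rw [ind, if_pos h]
lemma ind_of_not {p : Prop} (h : ¬ p) : ind p = 0 := by rw [ind, if_neg h]
lemma ind_congr {p q : Prop} (h : p ↔ q) : ind p = ind q := by
  by_cases hp : p
  · rw [ind_of hp, ind_of (h.mp hp)]
  · rw [ind_of_not hp, ind_of_not (fun hq => hp (h.mpr hq))]

lemma grid_adj_iff {a b : ℤ × ℤ} : gridGraph.Adj a b ↔
    (b = (a.1+1, a.2) ∨ b = (a.1-1, a.2) ∨ b = (a.1, a.2+1) ∨ b = (a.1, a.2-1)) := by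
  show |a.1 - b.1| + |a.2 - b.2| = 1 ↔ _
  rw [Int.abs_eq_natAbs, Int.abs_eq_natAbs]
  simp only [Prod.ext_iff]
  omega

/-- A horizontal dart at height `> qy` spanning columns `qx, qx+1`. -/
def Cross (qx qy : ℤ) (d : gridGraph.Dart) : Prop :=
  d.fst.2 = d.snd.2 ∧ qy < d.fst.2 ∧
    ((d.fst.1 = qx ∧ d.snd.1 = qx + 1) ∨ (d.fst.1 = qx + 1 ∧ d.snd.1 = qx))

noncomputable def parity {u : ℤ × ℤ} (c : gridGraph.Walk u u) (qx qy : ℤ) : ZMod 2 :=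
  (c.darts.map fun d => ind (Cross qx qy d)).sum

lemma sum_split {α : Type*} (l : List α) (F f g : α → ZMod 2)
    (h : ∀ a ∈ l, F a = f a + g a) :
    (l.map F).sum = (l.map f).sum + (l.map g).sum := by
  induction l with
  | nil => simp
  | cons a l ih =>
    simp only [List.map_cons, List.sum_cons]
    rw [h a (by simp), ih (fun a ha => h a (by simp [ha]))]
    exact add_add_add_comm _ _ _ _

lemma sum_ind_eq_zero {α : Type*} {l : List α} {a : α} (ha : a ∉ l) :
    (l.map fun x => ind (x = a)).sum = 0 := by
  apply List.sum_eq_zero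
  intro x hx
  obtain ⟨y, hy, rfl⟩ := List.mem_map.mp hx
  exact ind_of_not (fun h => ha (h ▸ hy))

lemma sum_ind_eq_one {α : Type*} {l : List α} {a : α} (hn : l.Nodup) (ha : a ∈ l) :
    (l.map fun x => ind (x = a)).sum = 1 := by
  induction l with
  | nil => simp at ha
  | cons b l ih =>
    rw [List.map_cons, List.sum_cons]
    rcases List.mem_cons.mp ha with rfl | ha'
    · rw [ind_of rfl, sum_ind_eq_zero (List.nodup_cons.mp hn).1, add_zero]
    · have hb : ¬ (b = a) := by rintro rfl; exact (List.nodup_cons.mp hn).1 ha'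
      rw [ind_of_not hb, ih (List.nodup_cons.mp hn).2 ha', zero_add]

lemma darts_fst_perm_snd {u : ℤ × ℤ} (c : gridGraph.Walk u u) :
    (c.darts.map (·.fst)).Perm (c.darts.map (·.snd)) := by
  have h3 : (c.darts.map (·.fst)) ++ [u] = u :: c.darts.map (·.snd) :=
    c.map_fst_darts_append.trans c.cons_map_snd_darts.symm
  have h4 := List.perm_append_singleton u (c.darts.map (·.fst))
  rw [h3] at h4
  exact h4.cons_inv.symm

lemma sum_SP_zero {u : ℤ × ℤ} (c : gridGraph.Walk u u) (SP : ℤ × ℤ → Prop) :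
    (c.darts.map fun d => ind (SP d.fst) + ind (SP d.snd)).sum = 0 := by
  rw [sum_split c.darts _ (fun d => ind (SP d.fst)) (fun d => ind (SP d.snd))
    (fun a _ => rfl)]
  have h1 : (c.darts.map fun d => ind (SP d.fst))
      = (c.darts.map (·.fst)).map (fun v => ind (SP v)) := by
    rw [List.map_map]; rfl
  have h2 : (c.darts.map fun d => ind (SP d.snd))
      = (c.darts.map (·.snd)).map (fun v => ind (SP v)) := by
    rw [List.map_map]; rfl
  rw [h1, h2, ((darts_fst_perm_snd c).map (fun v => ind (SP v))).sum_eq]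
  generalize ((c.darts.map (·.snd)).map fun v => ind (SP v)).sum = X
  have h2 : (2 : ZMod 2) = 0 := rfl
  calc X + X = 2 * X := by ring
  _ = 0 := by rw [h2, zero_mul]

lemma parity_step_right {u : ℤ × ℤ} (c : gridGraph.Walk u u) (qx qy : ℤ)
    (hq' : ((qx + 1, qy) : ℤ × ℤ) ∉ c.support) :
    parity c qx qy = parity c (qx + 1) qy := by
  have key : ∀ d ∈ c.darts,
      (fun d : gridGraph.Dart =>
        ind ((fun v : ℤ × ℤ => v.1 = qx + 1 ∧ qy < v.2) d.fst)
          + ind ((fun v : ℤ × ℤ => v.1 = qx + 1 ∧ qy < v.2) d.snd)) d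
      = ind (Cross qx qy d) + ind (Cross (qx+1) qy d) := by
    intro d hd
    have hfst := c.dart_fst_mem_support_of_mem_darts hd
    have hsnd := c.dart_snd_mem_support_of_mem_darts hd
    have hadj := d.adj
    simp only
    rcases grid_adj_iff.mp hadj with h | h | h | h
    all_goals
      have hx : d.snd.1 = _ := congrArg Prod.fst h
    all_goals
      have hy : d.snd.2 = _ := congrArg Prod.snd h
    · -- b = (a.1+1, a.2)
      have e1 : Cross qx qy d ↔ (d.snd.1 = qx + 1 ∧ qy < d.snd.2) := by
        simp only [Cross]; omega
      have e2 : Cross (qx+1) qy d ↔ (d.fst.1 = qx + 1 ∧ qy < d.fst.2) := by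
        simp only [Cross]; omega
      rw [ind_congr e1, ind_congr e2, add_comm]
    · -- b = (a.1-1, a.2)
      have e1 : Cross qx qy d ↔ (d.fst.1 = qx + 1 ∧ qy < d.fst.2) := by
        simp only [Cross]; omega
      have e2 : Cross (qx+1) qy d ↔ (d.snd.1 = qx + 1 ∧ qy < d.snd.2) := by
        simp only [Cross]; omega
      rw [ind_congr e1, ind_congr e2]
    · -- b = (a.1, a.2+1)  (vertical up)
      rw [ind_of_not (show ¬ Cross qx qy d by simp only [Cross]; omega),
        ind_of_not (show ¬ Cross (qx+1) qy d by simp only [Cross]; omega)]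
      by_cases hc1 : d.fst.1 = qx + 1 ∧ qy < d.fst.2
      · by_cases hc2 : d.snd.1 = qx + 1 ∧ qy < d.snd.2
        · rw [ind_of hc1, ind_of hc2]; decide
        · exfalso; omega
      · by_cases hc2 : d.snd.1 = qx + 1 ∧ qy < d.snd.2
        · exfalso
          exact hq' (by
            rwa [show d.fst = ((qx+1 : ℤ), qy) from Prod.ext_iff.mpr ⟨by omega, by omega⟩]
              at hfst)
        · rw [ind_of_not hc1, ind_of_not hc2]
    · -- b = (a.1, a.2-1)  (vertical down)
      rw [ind_of_not (show ¬ Cross qx qy d by simp only [Cross]; omega),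
        ind_of_not (show ¬ Cross (qx+1) qy d by simp only [Cross]; omega)]
      by_cases hc1 : d.fst.1 = qx + 1 ∧ qy < d.fst.2
      · by_cases hc2 : d.snd.1 = qx + 1 ∧ qy < d.snd.2
        · rw [ind_of hc1, ind_of hc2]; decide
        · exfalso
          exact hq' (by
            rwa [show d.snd = ((qx+1 : ℤ), qy) from Prod.ext_iff.mpr ⟨by omega, by omega⟩]
              at hsnd)
      · by_cases hc2 : d.snd.1 = qx + 1 ∧ qy < d.snd.2
        · exfalso; omega
        · rw [ind_of_not hc1, ind_of_not hc2]
  have hsum : parity c qx qy + parity c (qx + 1) qy = 0 := by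
    unfold parity
    rw [← sum_split c.darts _ _ _ key]
    exact sum_SP_zero c (fun v : ℤ × ℤ => v.1 = qx + 1 ∧ qy < v.2)
  have hcancel : ∀ x y : ZMod 2, x + y = 0 → x = y := by decide
  exact hcancel _ _ hsum

lemma parity_step_up {u : ℤ × ℤ} (c : gridGraph.Walk u u) (qx qy : ℤ)
    (hq' : ((qx, qy + 1) : ℤ × ℤ) ∉ c.support) :
    parity c qx qy = parity c qx (qy + 1) := by
  unfold parity
  refine congrArg List.sum (List.map_congr_left ?_)
  intro d hd
  have hfst := c.dart_fst_mem_support_of_mem_darts hd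
  have hsnd := c.dart_snd_mem_support_of_mem_darts hd
  apply ind_congr
  constructor
  · rintro ⟨h1, h2, h3⟩
    by_cases hE : d.fst.2 = qy + 1
    · exfalso
      rcases h3 with ⟨ha, -⟩ | ⟨-, hb⟩
      · exact hq' (by rwa [show d.fst = ((qx : ℤ), qy+1) from
          Prod.ext_iff.mpr ⟨ha, hE⟩] at hfst)
      · exact hq' (by rwa [show d.snd = ((qx : ℤ), qy+1) from
          Prod.ext_iff.mpr ⟨hb, by omega⟩] at hsnd)
    · exact ⟨h1, by omega, h3⟩
  · rintro ⟨h1, h2, h3⟩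
    exact ⟨h1, by omega, h3⟩

lemma parity_walk {u : ℤ × ℤ} (c : gridGraph.Walk u u) (S : Set (ℤ × ℤ))
    (hS : ∀ w ∈ c.support, w ∉ S)
    {s t : S} (w : (gridGraph.induce S).Walk s t) :
    parity c s.val.1 s.val.2 = parity c t.val.1 t.val.2 := by
  induction w with
  | nil => rfl
  | @cons a b t' h w ih =>
    refine Eq.trans ?_ ih
    have hadj : gridGraph.Adj a.val b.val := h
    have ha : a.val ∉ c.support := fun hm => (hS _ hm) a.2
    have hb : b.val ∉ c.support := fun hm => (hS _ hm) b.2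
    rcases grid_adj_iff.mp hadj with hcase | hcase | hcase | hcase
    all_goals
      have h1 : b.val.1 = _ := congrArg Prod.fst hcase
    all_goals
      have h2 : b.val.2 = _ := congrArg Prod.snd hcase
    · rw [h1, h2]
      exact parity_step_right c _ _ (by
        rwa [show ((a.val.1 + 1, a.val.2) : ℤ × ℤ) = b.val from hcase.symm])
    · have hstep := parity_step_right c b.val.1 b.val.2 (by
        rwa [show ((b.val.1 + 1, b.val.2) : ℤ × ℤ) = a.val from
          Prod.ext_iff.mpr ⟨by omega, by omega⟩])
      rw [show a.val.1 = b.val.1 + 1 by omega, show a.val.2 = b.val.2 by omega]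
      exact hstep.symm
    · rw [h1, h2]
      exact parity_step_up c _ _ (by
        rwa [show ((a.val.1, a.val.2 + 1) : ℤ × ℤ) = b.val from hcase.symm])
    · have hstep := parity_step_up c b.val.1 b.val.2 (by
        rwa [show ((b.val.1, b.val.2 + 1) : ℤ × ℤ) = a.val from
          Prod.ext_iff.mpr ⟨by omega, by omega⟩])
      rw [show a.val.1 = b.val.1 by omega, show a.val.2 = b.val.2 + 1 by omega]
      exact hstep.symm

end ThinPolyAux

open ThinPolyAux SimpleGraph in
theorem oneThin_simple_dual_isTree (P : Finset (ℤ × ℤ)) (hne : P.Nonempty)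
    (hconn : (gridGraph.induce (↑P : Set (ℤ × ℤ))).Connected)
    (hthin : ¬ ∃ p : ℤ × ℤ, p ∈ P ∧ (p.1 + 1, p.2) ∈ P ∧ (p.1, p.2 + 1) ∈ P ∧
      (p.1 + 1, p.2 + 1) ∈ P)
    (hsimple : (gridGraph.induce ((↑P : Set (ℤ × ℤ))ᶜ)).Connected) :
    (gridGraph.induce (↑P : Set (ℤ × ℤ))).IsTree := by
  classical
  refine ⟨hconn, ?_⟩
  intro v c0 hc0
  let emb : (gridGraph.induce (↑P : Set (ℤ × ℤ))) →g gridGraph :=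
    ⟨Subtype.val, fun {a b} h => h⟩
  have hinj : Function.Injective emb := Subtype.val_injective
  set c : gridGraph.Walk v.val v.val := c0.map emb with hcdef
  have hc : c.IsCycle := hc0.map hinj
  have hP : ∀ w ∈ c.support, w ∈ P := by
    intro w hw
    rw [hcdef, SimpleGraph.Walk.support_map] at hw
    obtain ⟨x, hx, rfl⟩ := List.mem_map.mp hw
    exact x.2
  have hsupne : (c.support.toFinset : Finset (ℤ × ℤ)).Nonempty :=
    ⟨v.val, List.mem_toFinset.mpr c.start_mem_support⟩
  obtain ⟨p, hpF, hpmax⟩ :=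
    Finset.exists_max_image c.support.toFinset (fun w => toLex w) hsupne
  have hpS : p ∈ c.support := List.mem_toFinset.mp hpF
  have hmax' : ∀ w ∈ c.support, w.1 < p.1 ∨ (w.1 = p.1 ∧ w.2 ≤ p.2) := by
    intro w hw
    exact Prod.Lex.le_iff.mp (hpmax w (List.mem_toFinset.mpr hw))
  have htail_ne : c.support.tail ≠ [] := by
    apply List.ne_nil_of_length_pos
    rw [List.length_tail, c.length_support]
    have := hc.three_le_length
    omega
  have hmem_snd : ∀ w ∈ c.support, w ∈ c.darts.map (·.snd) := by
    intro w hw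
    rw [c.map_snd_darts]
    rcases List.mem_cons.mp (by rwa [c.support_eq_cons] at hw) with rfl | h
    · have h1 : v.val ∈ c.darts.map (·.fst) := by
        rw [c.map_fst_darts, c.support_eq_cons]
        cases htail : c.support.tail with
        | nil => exact absurd htail htail_ne
        | cons b t => simp
      have h2 := (darts_fst_perm_snd c).mem_iff.mp h1
      rwa [c.map_snd_darts] at h2
    · exact h
  obtain ⟨d1, hd1, hd1p⟩ := List.mem_map.mp (hmem_snd p hpS)
  obtain ⟨d2, hd2, hd2p⟩ := List.mem_map.mp
    ((darts_fst_perm_snd c).mem_iff.mpr (hmem_snd p hpS))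
  have hnbr : ∀ w : ℤ × ℤ, w ∈ c.support → gridGraph.Adj p w →
      w = (p.1 - 1, p.2) ∨ w = (p.1, p.2 - 1) := by
    intro w hw hadj
    have hm := hmax' w hw
    rcases grid_adj_iff.mp hadj with h | h | h | h
    · have hx := congrArg Prod.fst h; have hy := congrArg Prod.snd h
      exfalso; omega
    · exact Or.inl h
    · have hx := congrArg Prod.fst h; have hy := congrArg Prod.snd h
      exfalso; omega
    · exact Or.inr h
  have hq1 := hnbr d1.fst (c.dart_fst_mem_support_of_mem_darts hd1)
    (by have := d1.adj; rw [hd1p] at this; exact this.symm)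
  have hq2 := hnbr d2.snd (c.dart_snd_mem_support_of_mem_darts hd2)
    (by have := d2.adj; rw [hd2p] at this; exact this)
  have hne12 : d1 ≠ d2 := by
    rintro rfl
    have := d1.adj
    rw [hd1p, hd2p] at this
    exact gridGraph.loopless.irrefl p this
  have hedges_nodup : c.edges.Nodup := hc.isCircuit.isTrail.edges_nodup
  have hedgene : d1.edge ≠ d2.edge := fun h =>
    hne12 (List.inj_on_of_nodup_map hedges_nodup hd1 hd2 h)
  have hq12 : d1.fst ≠ d2.snd := by
    rintro hEq
    apply hedgene
    rw [show d1.edge = s(d1.fst, d1.snd) from rfl,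
      show d2.edge = s(d2.fst, d2.snd) from rfl, hd1p, hd2p, hEq]
    exact Sym2.eq_swap
  have hkey : s(((p.1 - 1, p.2) : ℤ × ℤ), p) ∈ c.edges ∧
      ((p.1 - 1, p.2) : ℤ × ℤ) ∈ c.support ∧
      ((p.1, p.2 - 1) : ℤ × ℤ) ∈ c.support := by
    rcases hq1 with h1 | h1
    · rcases hq2 with h2 | h2
      · exact absurd (h1.trans h2.symm) hq12
      · refine ⟨?_, h1 ▸ c.dart_fst_mem_support_of_mem_darts hd1,
          h2 ▸ c.dart_snd_mem_support_of_mem_darts hd2⟩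
        have he : d1.edge = s(((p.1 - 1, p.2) : ℤ × ℤ), p) := by
          rw [show d1.edge = s(d1.fst, d1.snd) from rfl, hd1p, h1]
        exact he ▸ List.mem_map_of_mem hd1
    · rcases hq2 with h2 | h2
      · refine ⟨?_, h2 ▸ c.dart_snd_mem_support_of_mem_darts hd2,
          h1 ▸ c.dart_fst_mem_support_of_mem_darts hd1⟩
        have he : d2.edge = s(((p.1 - 1, p.2) : ℤ × ℤ), p) := by
          rw [show d2.edge = s(d2.fst, d2.snd) from rfl, hd2p, h2]
          exact Sym2.eq_swap
        exact he ▸ List.mem_map_of_mem hd2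
      · exact absurd (h1.trans h2.symm) hq12
  obtain ⟨hEmem, haS, hbS⟩ := hkey
  have hd0 : ((p.1 - 1, p.2 - 1) : ℤ × ℤ) ∉ P := by
    intro hmem
    apply hthin
    refine ⟨(p.1 - 1, p.2 - 1), hmem, ?_, ?_, ?_⟩
    · show ((p.1 - 1 + 1, p.2 - 1) : ℤ × ℤ) ∈ P
      rw [show ((p.1 - 1 + 1, p.2 - 1) : ℤ × ℤ) = (p.1, p.2 - 1) from
        Prod.ext_iff.mpr ⟨by ring, by ring⟩]
      exact hP _ hbS
    · show ((p.1 - 1, p.2 - 1 + 1) : ℤ × ℤ) ∈ P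
      rw [show ((p.1 - 1, p.2 - 1 + 1) : ℤ × ℤ) = (p.1 - 1, p.2) from
        Prod.ext_iff.mpr ⟨by ring, by ring⟩]
      exact hP _ haS
    · show ((p.1 - 1 + 1, p.2 - 1 + 1) : ℤ × ℤ) ∈ P
      rw [show ((p.1 - 1 + 1, p.2 - 1 + 1) : ℤ × ℤ) = p from
        Prod.ext_iff.mpr ⟨by ring, by ring⟩]
      exact hP _ hpS
  have hcross_iff : ∀ d ∈ c.darts,
      ind (Cross (p.1 - 1) (p.2 - 1) d)
        = ind (d.edge = s(((p.1 - 1, p.2) : ℤ × ℤ), p)) := by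
    intro d hd
    have hfst := c.dart_fst_mem_support_of_mem_darts hd
    have hsnd := c.dart_snd_mem_support_of_mem_darts hd
    have hmf := hmax' d.fst hfst
    have hms := hmax' d.snd hsnd
    apply ind_congr
    simp only [Cross]
    constructor
    · rintro ⟨h1, h2, h3⟩
      rw [show d.edge = s(d.fst, d.snd) from rfl]
      rcases h3 with ⟨ha1, ha2⟩ | ⟨ha1, ha2⟩
      · rw [show d.fst = ((p.1 - 1, p.2) : ℤ × ℤ) from
            Prod.ext_iff.mpr ⟨by omega, by omega⟩,
          show d.snd = p from Prod.ext_iff.mpr ⟨by omega, by omega⟩]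
      · rw [show d.fst = p from Prod.ext_iff.mpr ⟨by omega, by omega⟩,
          show d.snd = ((p.1 - 1, p.2) : ℤ × ℤ) from
            Prod.ext_iff.mpr ⟨by omega, by omega⟩]
        exact Sym2.eq_swap
    · intro h
      have h' : s(d.fst, d.snd) = s(((p.1 - 1, p.2) : ℤ × ℤ), p) := h
      rcases Sym2.eq_iff.mp h' with ⟨hf, hs⟩ | ⟨hf, hs⟩ <;>
        · have hf1 := congrArg Prod.fst hf
          have hf2 := congrArg Prod.snd hf
          have hs1 := congrArg Prod.fst hs
          have hs2 := congrArg Prod.snd hs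
          omega
  have hpar1 : parity c (p.1 - 1) (p.2 - 1) = 1 := by
    unfold parity
    rw [List.map_congr_left hcross_iff]
    have hmm : (c.darts.map fun d => ind (d.edge = s(((p.1 - 1, p.2) : ℤ × ℤ), p)))
        = c.edges.map fun e => ind (e = s(((p.1 - 1, p.2) : ℤ × ℤ), p)) := by
      rw [show c.edges = c.darts.map SimpleGraph.Dart.edge from rfl, List.map_map]
      rfl
    rw [hmm]
    exact sum_ind_eq_one hedges_nodup hEmem
  obtain ⟨q0, hq0⟩ := hne
  set M : ℤ := (P.image Prod.snd).max' ⟨q0.2, Finset.mem_image_of_mem _ hq0⟩ + 1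
    with hM
  have hMgt : ∀ w ∈ P, w.2 < M := by
    intro w hw
    have := Finset.le_max' (P.image Prod.snd) w.2 (Finset.mem_image_of_mem _ hw)
    omega
  have hf0P : (((0 : ℤ), M) : ℤ × ℤ) ∉ P := by
    intro h
    have := hMgt _ h
    omega
  have hparM : parity c 0 M = 0 := by
    apply List.sum_eq_zero
    intro x hx
    obtain ⟨d, hd, rfl⟩ := List.mem_map.mp hx
    refine ind_of_not ?_
    intro hcr
    have h2 : M < d.fst.2 :=
      (show d.fst.2 = d.snd.2 ∧ M < d.fst.2 ∧
        ((d.fst.1 = 0 ∧ d.snd.1 = 0 + 1) ∨ (d.fst.1 = 0 + 1 ∧ d.snd.1 = 0))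
        from hcr).2.1
    have h3 := hMgt _ (hP _ (c.dart_fst_mem_support_of_mem_darts hd))
    omega
  have hd0c : ((p.1 - 1, p.2 - 1) : ℤ × ℤ) ∈ ((↑P : Set (ℤ × ℤ))ᶜ) := by
    simpa using hd0
  have hf0c : (((0 : ℤ), M) : ℤ × ℤ) ∈ ((↑P : Set (ℤ × ℤ))ᶜ) := by
    simpa using hf0P
  obtain ⟨w⟩ := hsimple.preconnected ⟨_, hd0c⟩ ⟨_, hf0c⟩
  have hS : ∀ w' ∈ c.support, w' ∉ ((↑P : Set (ℤ × ℤ))ᶜ) := by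
    intro w' hw' hww
    exact hww (Finset.mem_coe.mpr (hP w' hw'))
  have hinv : parity c (p.1 - 1) (p.2 - 1) = parity c 0 M := parity_walk c _ hS w
  rw [hpar1, hparM] at hinv
  exact one_ne_zero hinv
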